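/- For every N ≥ 1, every K ∈ ℕ, and every pair of starting decks d₁, d₂ (permutations of Fin N), the total variation distance between the K-step distributions of the random-to-top shuffle satisfies TV(μ_K(d₁), μ_K(d₂)) ≤ N · ((N−1)/N)^K. -/

import Mathlib

open scoped ENNReal

/-- Total variation distance between two distributions: `(1/2) Σ_x |μ(x) − ν(x)|`. -/
noncomputable def tvDist {X : Type*} (μ ν : PMF X) : ℝ≥0∞ :=
  (1 / 2) * ∑' x, max (μ x - ν x) (ν x - μ x)

/-- The permutation of positions that cyclically shifts the block `0..j` one place to the right:
it sends `0 ↦ j`, `i ↦ i − 1` for `1 ≤ i ≤ j`, and fixes the positions above `j`. Composing a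
deck with this permutation moves the card at position `j` to the top and shifts the cards at
positions `0..j−1` down one place. -/
def moveToTop {N : ℕ} (j : Fin N) : Equiv.Perm (Fin N) :=
  (List.range (j : ℕ)).foldl
    (fun acc k =>
      Equiv.swap (⟨k % N, Nat.mod_lt k j.pos⟩ : Fin N)
          (⟨(k + 1) % N, Nat.mod_lt (k + 1) j.pos⟩ : Fin N) * acc)
    1


lemma moveToTop_fold_apply {N : ℕ} (j : Fin N) :
    ∀ m, m ≤ (j : ℕ) → ∀ i : Fin N,
      (((List.range m).foldl
        (fun acc k =>
          Equiv.swap (⟨k % N, Nat.mod_lt k j.pos⟩ : Fin N)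
              (⟨(k + 1) % N, Nat.mod_lt (k + 1) j.pos⟩ : Fin N) * acc) 1) i : ℕ)
      = if (i : ℕ) = 0 then m else if (i : ℕ) ≤ m then (i : ℕ) - 1 else (i : ℕ) := by
  intro m
  induction m with
  | zero =>
    intro _ i
    simp only [List.range_zero, List.foldl_nil, Equiv.Perm.coe_one, id_eq]
    rcases Nat.eq_zero_or_pos (i : ℕ) with h | h
    · simp [h]
    · rw [if_neg (by omega), if_neg (by omega)]
  | succ m ih =>
    intro hm i
    have hmN : m + 1 < N := lt_of_le_of_lt hm j.isLt
    rw [List.range_succ, List.foldl_append, List.foldl_cons, List.foldl_nil]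
    have hmod : m % N = m := Nat.mod_eq_of_lt (by omega)
    have hmod1 : (m + 1) % N = m + 1 := Nat.mod_eq_of_lt (by omega)
    simp only [Equiv.Perm.mul_apply]
    have hIH := ih (by omega) i
    set F := (List.range m).foldl
        (fun acc k =>
          Equiv.swap (⟨k % N, Nat.mod_lt k j.pos⟩ : Fin N)
              (⟨(k + 1) % N, Nat.mod_lt (k + 1) j.pos⟩ : Fin N) * acc) 1 with hF
    have key : ∀ x : Fin N,
        ((Equiv.swap (⟨m % N, Nat.mod_lt m j.pos⟩ : Fin N)
          (⟨(m + 1) % N, Nat.mod_lt (m + 1) j.pos⟩ : Fin N)) x : ℕ)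
        = if (x : ℕ) = m then m + 1 else if (x : ℕ) = m + 1 then m else (x : ℕ) := by
      intro x
      rw [Equiv.swap_apply_def]
      split_ifs with h1 h2 h3 h4 h5
      all_goals simp_all [Fin.ext_iff]
    rw [key]
    rw [hIH]
    split_ifs <;> omega

section Det
variable {N : ℕ}

lemma moveToTop_apply_val (j i : Fin N) :
    ((moveToTop j) i : ℕ)
      = if (i : ℕ) = 0 then (j : ℕ) else if (i : ℕ) ≤ (j : ℕ) then (i : ℕ) - 1 else (i : ℕ) :=
  moveToTop_fold_apply j (j : ℕ) le_rfl i

/-- Move the card `c` to the top of the deck `e`. -/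
def stepC (c : Fin N) (e : Equiv.Perm (Fin N)) : Equiv.Perm (Fin N) :=
  e * moveToTop (e⁻¹ c)

lemma stepC_apply_zero (c : Fin N) (e : Equiv.Perm (Fin N)) (i : Fin N) (hi : (i : ℕ) = 0) :
    stepC c e i = c := by
  have h := moveToTop_apply_val (e⁻¹ c) i
  rw [if_pos hi] at h
  have : moveToTop (e⁻¹ c) i = e⁻¹ c := Fin.ext h
  rw [stepC, Equiv.Perm.mul_apply, this, Equiv.Perm.inv_def, Equiv.apply_symm_apply]

lemma stepC_apply_le (c : Fin N) (e : Equiv.Perm (Fin N)) (i : Fin N)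
    (h0 : 0 < (i : ℕ)) (hle : (i : ℕ) ≤ ((e⁻¹ c : Fin N) : ℕ)) :
    stepC c e i = e ⟨(i : ℕ) - 1, by omega⟩ := by
  have h := moveToTop_apply_val (e⁻¹ c) i
  rw [if_neg (by omega), if_pos hle] at h
  have : moveToTop (e⁻¹ c) i = ⟨(i : ℕ) - 1, by omega⟩ := Fin.ext h
  rw [stepC, Equiv.Perm.mul_apply, this]

lemma stepC_apply_gt (c : Fin N) (e : Equiv.Perm (Fin N)) (i : Fin N)
    (hgt : ((e⁻¹ c : Fin N) : ℕ) < (i : ℕ)) :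
    stepC c e i = e i := by
  have h := moveToTop_apply_val (e⁻¹ c) i
  rw [if_neg (by omega), if_neg (by omega)] at h
  have : moveToTop (e⁻¹ c) i = i := Fin.ext h
  rw [stepC, Equiv.Perm.mul_apply, this]

/-- The touched cards occupy the top block, and the two decks agree there. -/
def RInv (T : Finset (Fin N)) (e₁ e₂ : Equiv.Perm (Fin N)) : Prop :=
  (∀ i : Fin N, (i : ℕ) < T.card → e₁ i = e₂ i) ∧
  (∀ i : Fin N, e₁ i ∈ T ↔ (i : ℕ) < T.card) ∧
  (∀ i : Fin N, e₂ i ∈ T ↔ (i : ℕ) < T.card)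

lemma inv_empty (e₁ e₂ : Equiv.Perm (Fin N)) : RInv ∅ e₁ e₂ := by
  refine ⟨?_, ?_, ?_⟩ <;> intro i <;> simp

lemma inv_eq_of_card (T : Finset (Fin N)) (e₁ e₂ : Equiv.Perm (Fin N))
    (h : RInv T e₁ e₂) (hc : T.card = N) : e₁ = e₂ :=
  Equiv.ext fun i => h.1 i (by rw [hc]; exact i.isLt)

-- block property for a single deck
lemma blk_step_mem {T : Finset (Fin N)} {e : Equiv.Perm (Fin N)}
    (h : ∀ i : Fin N, e i ∈ T ↔ (i : ℕ) < T.card) {c : Fin N} (hc : c ∈ T) :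
    ∀ i : Fin N, stepC c e i ∈ T ↔ (i : ℕ) < T.card := by
  intro i
  have hp : ((e⁻¹ c : Fin N) : ℕ) < T.card := by
    have := h (e⁻¹ c); simp only [Equiv.Perm.inv_def, Equiv.apply_symm_apply] at this; exact this.mp hc
  rcases Nat.eq_zero_or_pos (i : ℕ) with h0 | h0
  · rw [stepC_apply_zero c e i h0]
    have hpos : 0 < T.card := Finset.card_pos.mpr ⟨c, hc⟩
    simp [hc, h0, hpos]
  · by_cases hle : (i : ℕ) ≤ ((e⁻¹ c : Fin N) : ℕ)
    · rw [stepC_apply_le c e i h0 hle, h]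
      simp only []
      constructor <;> intro <;> omega
    · rw [stepC_apply_gt c e i (by omega), h]

lemma blk_step_not_mem {T : Finset (Fin N)} {e : Equiv.Perm (Fin N)}
    (h : ∀ i : Fin N, e i ∈ T ↔ (i : ℕ) < T.card) {c : Fin N} (hc : c ∉ T) :
    ∀ i : Fin N, stepC c e i ∈ insert c T ↔ (i : ℕ) < (insert c T).card := by
  intro i
  rw [Finset.card_insert_of_notMem hc]
  have hp : ¬ ((e⁻¹ c : Fin N) : ℕ) < T.card := by
    have := h (e⁻¹ c); simp only [Equiv.Perm.inv_def, Equiv.apply_symm_apply] at this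
    exact fun hlt => hc (this.mpr hlt)
  rcases Nat.eq_zero_or_pos (i : ℕ) with h0 | h0
  · rw [stepC_apply_zero c e i h0]
    simp [h0]
  · by_cases hle : (i : ℕ) ≤ ((e⁻¹ c : Fin N) : ℕ)
    · rw [stepC_apply_le c e i h0 hle, Finset.mem_insert]
      have hne : e ⟨(i : ℕ) - 1, by omega⟩ ≠ c := by
        intro he
        have : (⟨(i : ℕ) - 1, by omega⟩ : Fin N) = e⁻¹ c := by
          rw [← he, Equiv.Perm.inv_def, Equiv.symm_apply_apply]
        have := congrArg Fin.val this
        change (i : ℕ) - 1 = ((e⁻¹ c : Fin N) : ℕ) at this; omega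
      rw [h]
      simp only [hne, false_or]
      constructor <;> intro <;> omega
    · rw [stepC_apply_gt c e i (by omega), Finset.mem_insert]
      have hne : e i ≠ c := by
        intro he
        have : i = e⁻¹ c := by rw [← he, Equiv.Perm.inv_def, Equiv.symm_apply_apply]
        have := congrArg Fin.val this; omega
      rw [h]
      simp only [hne, false_or]
      constructor <;> intro <;> omega

lemma inv_step_mem {T : Finset (Fin N)} {e₁ e₂ : Equiv.Perm (Fin N)}
    (h : RInv T e₁ e₂) {c : Fin N} (hc : c ∈ T) : RInv T (stepC c e₁) (stepC c e₂) := by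
  obtain ⟨hagree, h1, h2⟩ := h
  refine ⟨?_, blk_step_mem h1 hc, blk_step_mem h2 hc⟩
  have hp1 : ((e₁⁻¹ c : Fin N) : ℕ) < T.card := by
    have := h1 (e₁⁻¹ c); simp only [Equiv.Perm.inv_def, Equiv.apply_symm_apply] at this; exact this.mp hc
  have hpe : e₂⁻¹ c = e₁⁻¹ c := by
    have : e₂ (e₁⁻¹ c) = c := by
      rw [← hagree (e₁⁻¹ c) hp1, Equiv.Perm.inv_def, Equiv.apply_symm_apply]
    conv_lhs => rw [← this]
    rw [Equiv.Perm.inv_def, Equiv.symm_apply_apply]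
  intro i hi
  rcases Nat.eq_zero_or_pos (i : ℕ) with h0 | h0
  · rw [stepC_apply_zero c e₁ i h0, stepC_apply_zero c e₂ i h0]
  · by_cases hle : (i : ℕ) ≤ ((e₁⁻¹ c : Fin N) : ℕ)
    · rw [stepC_apply_le c e₁ i h0 hle, stepC_apply_le c e₂ i h0 (by rw [hpe]; exact hle)]
      exact hagree _ (by simp; omega)
    · rw [stepC_apply_gt c e₁ i (by omega), stepC_apply_gt c e₂ i (by rw [hpe]; omega)]
      exact hagree i hi

lemma inv_step_not_mem {T : Finset (Fin N)} {e₁ e₂ : Equiv.Perm (Fin N)}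
    (h : RInv T e₁ e₂) {c : Fin N} (hc : c ∉ T) :
    RInv (insert c T) (stepC c e₁) (stepC c e₂) := by
  obtain ⟨hagree, h1, h2⟩ := h
  refine ⟨?_, blk_step_not_mem h1 hc, blk_step_not_mem h2 hc⟩
  have hp1 : ¬ ((e₁⁻¹ c : Fin N) : ℕ) < T.card := by
    have := h1 (e₁⁻¹ c); simp only [Equiv.Perm.inv_def, Equiv.apply_symm_apply] at this
    exact fun hlt => hc (this.mpr hlt)
  have hp2 : ¬ ((e₂⁻¹ c : Fin N) : ℕ) < T.card := by
    have := h2 (e₂⁻¹ c); simp only [Equiv.Perm.inv_def, Equiv.apply_symm_apply] at this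
    exact fun hlt => hc (this.mpr hlt)
  intro i hi
  rw [Finset.card_insert_of_notMem hc] at hi
  rcases Nat.eq_zero_or_pos (i : ℕ) with h0 | h0
  · rw [stepC_apply_zero c e₁ i h0, stepC_apply_zero c e₂ i h0]
  · rw [stepC_apply_le c e₁ i h0 (by omega), stepC_apply_le c e₂ i h0 (by omega)]
    exact hagree _ (by simp; omega)

end Det


/-- One step of the random-to-top shuffle: sample a position `j` uniformly and move the card at
position `j` to the top of the deck. -/
noncomputable def rtopStep {N : ℕ} (h : 0 < N) (d : Equiv.Perm (Fin N)) :
    PMF (Equiv.Perm (Fin N)) :=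
  haveI : Nonempty (Fin N) := ⟨⟨0, h⟩⟩
  (PMF.uniformOfFintype (Fin N)).bind fun j => PMF.pure (d * moveToTop j)

/-- Distribution of the deck after `K` steps of the random-to-top shuffle starting from `d`. -/
noncomputable def rtopWalk {N : ℕ} (h : 0 < N) (d : Equiv.Perm (Fin N)) :
    ℕ → PMF (Equiv.Perm (Fin N))
  | 0 => PMF.pure d
  | (K + 1) => (rtopWalk h d K).bind (rtopStep h)


section Prob
variable {N : ℕ}

lemma rtopStep_eq (h : 0 < N) (d : Equiv.Perm (Fin N)) :
    rtopStep h d =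
      haveI : Nonempty (Fin N) := ⟨⟨0, h⟩⟩
      (PMF.uniformOfFintype (Fin N)).bind fun c => PMF.pure (stepC c d) := by
  haveI : Nonempty (Fin N) := ⟨⟨0, h⟩⟩
  ext x
  simp only [rtopStep, PMF.bind_apply, PMF.uniformOfFintype_apply, tsum_fintype]
  apply Fintype.sum_equiv (d : Fin N ≃ Fin N)
  intro j
  simp [stepC, Equiv.Perm.inv_def]

lemma rtopWalk_succ' (h : 0 < N) (K : ℕ) :
    ∀ d : Equiv.Perm (Fin N), rtopWalk h d (K + 1) =
      haveI : Nonempty (Fin N) := ⟨⟨0, h⟩⟩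
      (PMF.uniformOfFintype (Fin N)).bind fun c => rtopWalk h (stepC c d) K := by
  haveI : Nonempty (Fin N) := ⟨⟨0, h⟩⟩
  induction K with
  | zero =>
    intro d
    show (PMF.pure d).bind (rtopStep h) = _
    rw [PMF.pure_bind, rtopStep_eq]
    rfl
  | succ K ih =>
    intro d
    show (rtopWalk h d (K + 1)).bind (rtopStep h) = _
    rw [ih d, PMF.bind_bind]
    rfl

noncomputable def cWalk (h : 0 < N) :
    ℕ → Equiv.Perm (Fin N) × Equiv.Perm (Fin N) → PMF (Equiv.Perm (Fin N) × Equiv.Perm (Fin N))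
  | 0, e => PMF.pure e
  | (K + 1), e =>
      haveI : Nonempty (Fin N) := ⟨⟨0, h⟩⟩
      (PMF.uniformOfFintype (Fin N)).bind fun c => cWalk h K (stepC c e.1, stepC c e.2)

lemma cWalk_fst (h : 0 < N) (K : ℕ) :
    ∀ e, (cWalk h K e).map Prod.fst = rtopWalk h e.1 K := by
  induction K with
  | zero => intro e; show (PMF.pure e).map Prod.fst = PMF.pure e.1; exact PMF.pure_map Prod.fst e
  | succ K ih =>
    intro e
    haveI : Nonempty (Fin N) := ⟨⟨0, h⟩⟩
    show ((PMF.uniformOfFintype (Fin N)).bind fun c =>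
        cWalk h K (stepC c e.1, stepC c e.2)).map Prod.fst = _
    rw [PMF.map_bind, rtopWalk_succ' h K e.1]
    exact congrArg _ (funext fun c => ih _)

lemma cWalk_snd (h : 0 < N) (K : ℕ) :
    ∀ e, (cWalk h K e).map Prod.snd = rtopWalk h e.2 K := by
  induction K with
  | zero => intro e; show (PMF.pure e).map Prod.snd = PMF.pure e.2; exact PMF.pure_map Prod.snd e
  | succ K ih =>
    intro e
    haveI : Nonempty (Fin N) := ⟨⟨0, h⟩⟩
    show ((PMF.uniformOfFintype (Fin N)).bind fun c =>
        cWalk h K (stepC c e.1, stepC c e.2)).map Prod.snd = _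
    rw [PMF.map_bind, rtopWalk_succ' h K e.2]
    exact congrArg _ (funext fun c => ih _)

end Prob

section Coupling
variable {X : Type*} [Fintype X] [DecidableEq X]

lemma map_fst_apply (π : PMF (X × X)) (x : X) :
    (π.map Prod.fst) x = ∑ y : X, π (x, y) := by
  rw [PMF.map_apply, tsum_fintype, Fintype.sum_prod_type]
  refine (Finset.sum_eq_single_of_mem x (Finset.mem_univ x) fun a _ ha => ?_).trans ?_
  · have hxa : ¬ (x = a) := fun hh => ha hh.symm
    simp [hxa]
  · simp

lemma map_snd_apply (π : PMF (X × X)) (y : X) :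
    (π.map Prod.snd) y = ∑ x : X, π (x, y) := by
  rw [PMF.map_apply, tsum_fintype, Fintype.sum_prod_type]
  refine Finset.sum_congr rfl fun a _ => (Finset.sum_eq_single_of_mem y (Finset.mem_univ y)
    fun b _ hb => ?_).trans ?_
  · have hyb : ¬ (y = b) := fun hh => hb hh.symm
    simp [hyb]
  · simp

lemma tv_le_coupling (π : PMF (X × X)) :
    tvDist (π.map Prod.fst) (π.map Prod.snd)
      ≤ ∑' p : X × X, if p.1 = p.2 then 0 else π p := by
  set μ := π.map Prod.fst
  set ν := π.map Prod.snd
  set D := ∑' p : X × X, if p.1 = p.2 then 0 else π p with hD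
  have hDsum : D = ∑ a : X, ∑ b : X, (if a = b then 0 else π (a, b)) := by
    rw [hD, tsum_fintype, Fintype.sum_prod_type]
  have hA : (∑' x, (μ x - ν x)) ≤ D := by
    rw [tsum_fintype, hDsum]
    refine Finset.sum_le_sum fun x _ => ?_
    have hμ : μ x = π (x, x) + ∑ y : X, (if x = y then 0 else π (x, y)) := by
      rw [map_fst_apply]
      have h2 : ∀ y : X, π (x, y)
          = (if x = y then π (x, y) else 0) + (if x = y then 0 else π (x, y)) := by
        intro y; split_ifs <;> simp
      rw [Finset.sum_congr rfl fun y _ => h2 y, Finset.sum_add_distrib]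
      congr 1
      simp [Finset.sum_ite_eq]
    have hν : π (x, x) ≤ ν x := by
      rw [map_snd_apply]
      exact Finset.single_le_sum (f := fun a => π (a, x)) (fun _ _ => zero_le)
        (Finset.mem_univ x)
    calc μ x - ν x ≤ μ x - π (x, x) := tsub_le_tsub_left hν _
      _ = ∑ y : X, (if x = y then 0 else π (x, y)) := by
          rw [hμ, ENNReal.add_sub_cancel_left (PMF.apply_ne_top π (x, x))]
  have hB : (∑' x, (ν x - μ x)) ≤ D := by
    rw [tsum_fintype, hDsum, Finset.sum_comm]
    refine Finset.sum_le_sum fun x _ => ?_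
    have hν : ν x = π (x, x) + ∑ a : X, (if a = x then 0 else π (a, x)) := by
      rw [map_snd_apply]
      have h2 : ∀ a : X, π (a, x)
          = (if a = x then π (a, x) else 0) + (if a = x then 0 else π (a, x)) := by
        intro a; split_ifs <;> simp
      rw [Finset.sum_congr rfl fun a _ => h2 a, Finset.sum_add_distrib]
      congr 1
      simp [Finset.sum_ite_eq']
    have hμ : π (x, x) ≤ μ x := by
      rw [map_fst_apply]
      exact Finset.single_le_sum (f := fun b => π (x, b)) (fun _ _ => zero_le)
        (Finset.mem_univ x)
    calc ν x - μ x ≤ ν x - π (x, x) := tsub_le_tsub_left hμ _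
      _ = ∑ a : X, (if a = x then 0 else π (a, x)) := by
          rw [hν, ENNReal.add_sub_cancel_left (PMF.apply_ne_top π (x, x))]
  calc tvDist μ ν ≤ (1 / 2) * ((∑' x, (μ x - ν x)) + ∑' x, (ν x - μ x)) := by
        unfold tvDist
        rw [← ENNReal.tsum_add]
        exact mul_le_mul_right (ENNReal.tsum_le_tsum fun x => max_le le_self_add le_add_self) _
    _ ≤ (1 / 2) * (D + D) := mul_le_mul_right (add_le_add hA hB) _
    _ = D := by
        rw [← two_mul, ← mul_assoc, one_div,
          ENNReal.inv_mul_cancel two_ne_zero ENNReal.ofNat_ne_top, one_mul]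

end Coupling

section Main
variable {N : ℕ}

lemma cWalk_offdiag_le (h : 0 < N) (K : ℕ) :
    ∀ (T : Finset (Fin N)) (e₁ e₂ : Equiv.Perm (Fin N)), RInv T e₁ e₂ →
      (∑' p : Equiv.Perm (Fin N) × Equiv.Perm (Fin N),
          if p.1 = p.2 then 0 else cWalk h K (e₁, e₂) p)
        ≤ ((N - T.card : ℕ) : ℝ≥0∞) * (((N : ℝ≥0∞) - 1) / (N : ℝ≥0∞)) ^ K := by
  haveI : Nonempty (Fin N) := ⟨⟨0, h⟩⟩
  induction K with
  | zero =>
    intro T e₁ e₂ hInv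
    by_cases he : e₁ = e₂
    · have hz : ∀ p : Equiv.Perm (Fin N) × Equiv.Perm (Fin N),
          (if p.1 = p.2 then 0 else cWalk h 0 (e₁, e₂) p) = 0 := by
        intro p
        split_ifs with hp
        · rfl
        · show (PMF.pure (e₁, e₂)) p = 0
          rw [PMF.pure_apply, if_neg]
          rintro rfl
          exact hp he
      simp only [hz, tsum_zero]
      exact zero_le
    · have hcard : T.card < N := by
        have hle : T.card ≤ N := by simpa using Finset.card_le_univ T
        exact lt_of_le_of_ne hle fun heq => he (inv_eq_of_card T e₁ e₂ hInv heq)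
      have hb : (1 : ℝ≥0∞) ≤ ((N - T.card : ℕ) : ℝ≥0∞) := by
        rw [Nat.one_le_cast]; omega
      calc (∑' p : Equiv.Perm (Fin N) × Equiv.Perm (Fin N),
              if p.1 = p.2 then 0 else cWalk h 0 (e₁, e₂) p)
          ≤ ∑' p, cWalk h 0 (e₁, e₂) p :=
            ENNReal.tsum_le_tsum fun p => by split_ifs <;> simp
        _ = 1 := (cWalk h 0 (e₁, e₂)).tsum_coe
        _ ≤ _ := by rw [pow_zero, mul_one]; exact hb
  | succ K ih =>
    intro T e₁ e₂ hInv
    set r : ℝ≥0∞ := ((N : ℝ≥0∞) - 1) / (N : ℝ≥0∞) with hrdef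
    set t := T.card with ht
    have h1 : ∀ p : Equiv.Perm (Fin N) × Equiv.Perm (Fin N),
        cWalk h (K + 1) (e₁, e₂) p
          = ∑ c : Fin N, (N : ℝ≥0∞)⁻¹ * cWalk h K (stepC c e₁, stepC c e₂) p := by
      intro p
      show ((PMF.uniformOfFintype (Fin N)).bind fun c =>
          cWalk h K (stepC c e₁, stepC c e₂)) p = _
      rw [PMF.bind_apply, tsum_fintype]
      refine Finset.sum_congr rfl fun c _ => ?_
      rw [PMF.uniformOfFintype_apply, Fintype.card_fin]
    have expand : (∑' p : Equiv.Perm (Fin N) × Equiv.Perm (Fin N),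
          if p.1 = p.2 then 0 else cWalk h (K + 1) (e₁, e₂) p)
        = ∑ c : Fin N, (N : ℝ≥0∞)⁻¹ *
            ∑' p : Equiv.Perm (Fin N) × Equiv.Perm (Fin N),
              (if p.1 = p.2 then 0 else cWalk h K (stepC c e₁, stepC c e₂) p) := by
      rw [tsum_fintype]
      calc (∑ p : Equiv.Perm (Fin N) × Equiv.Perm (Fin N),
              if p.1 = p.2 then 0 else cWalk h (K + 1) (e₁, e₂) p)
          = ∑ p : Equiv.Perm (Fin N) × Equiv.Perm (Fin N), ∑ c : Fin N,
              (N : ℝ≥0∞)⁻¹ * (if p.1 = p.2 then 0 else cWalk h K (stepC c e₁, stepC c e₂) p) := by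
            refine Finset.sum_congr rfl fun p _ => ?_
            split_ifs with hp
            · simp
            · rw [h1 p]
        _ = ∑ c : Fin N, ∑ p : Equiv.Perm (Fin N) × Equiv.Perm (Fin N),
              (N : ℝ≥0∞)⁻¹ * (if p.1 = p.2 then 0 else cWalk h K (stepC c e₁, stepC c e₂) p) :=
            Finset.sum_comm
        _ = _ := by
            refine Finset.sum_congr rfl fun c _ => ?_
            rw [← Finset.mul_sum, tsum_fintype]
    rw [expand]
    have hbound : ∀ c : Fin N,
        (∑' p : Equiv.Perm (Fin N) × Equiv.Perm (Fin N),
            if p.1 = p.2 then 0 else cWalk h K (stepC c e₁, stepC c e₂) p)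
          ≤ if c ∈ T then ((N - t : ℕ) : ℝ≥0∞) * r ^ K
            else ((N - (t + 1) : ℕ) : ℝ≥0∞) * r ^ K := by
      intro c
      split_ifs with hc
      · exact ih T _ _ (inv_step_mem hInv hc)
      · have := ih (insert c T) _ _ (inv_step_not_mem hInv hc)
        rwa [Finset.card_insert_of_notMem hc] at this
    calc (∑ c : Fin N, (N : ℝ≥0∞)⁻¹ *
            ∑' p : Equiv.Perm (Fin N) × Equiv.Perm (Fin N),
              if p.1 = p.2 then 0 else cWalk h K (stepC c e₁, stepC c e₂) p)
        ≤ ∑ c : Fin N, (N : ℝ≥0∞)⁻¹ *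
            (if c ∈ T then ((N - t : ℕ) : ℝ≥0∞) * r ^ K
              else ((N - (t + 1) : ℕ) : ℝ≥0∞) * r ^ K) :=
          Finset.sum_le_sum fun c _ => mul_le_mul_right (hbound c) _
      _ = (N : ℝ≥0∞)⁻¹ * ((t : ℝ≥0∞) * (((N - t : ℕ) : ℝ≥0∞) * r ^ K)
            + ((N - t : ℕ) : ℝ≥0∞) * (((N - (t + 1) : ℕ) : ℝ≥0∞) * r ^ K)) := by
          rw [← Finset.mul_sum]
          congr 1
          rw [← Finset.sum_add_sum_compl T (fun c => if c ∈ T then ((N - t : ℕ) : ℝ≥0∞) * r ^ K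
            else ((N - (t + 1) : ℕ) : ℝ≥0∞) * r ^ K)]
          congr 1
          · rw [Finset.sum_congr rfl fun c hc => if_pos hc, Finset.sum_const, nsmul_eq_mul]
          · rw [Finset.sum_congr rfl fun c hc => if_neg (Finset.mem_compl.mp hc),
              Finset.sum_const, nsmul_eq_mul, Finset.card_compl, Fintype.card_fin]
      _ = ((N - t : ℕ) : ℝ≥0∞) * r ^ (K + 1) := by
          have hnat : t * (N - t) + (N - t) * (N - (t + 1)) = (N - t) * (N - 1) := by
            rcases Nat.lt_or_ge t N with hlt | hge
            · have h2 : N - (t + 1) = (N - t) - 1 := by omega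
              have h3 : N - 1 = t + ((N - t) - 1) := by omega
              rw [h2, h3, Nat.mul_add, Nat.mul_comm (N - t) t]
            · have h2 : N - t = 0 := by omega
              simp [h2]
          have hcast : ((N : ℝ≥0∞) - 1) = ((N - 1 : ℕ) : ℝ≥0∞) := by
            rw [ENNReal.natCast_sub, Nat.cast_one]
          have hr : r = ((N - 1 : ℕ) : ℝ≥0∞) * (N : ℝ≥0∞)⁻¹ := by
            rw [hrdef, hcast, div_eq_mul_inv]
          have hsum : ((t * (N - t) + (N - t) * (N - (t + 1)) : ℕ) : ℝ≥0∞)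
              = (t : ℝ≥0∞) * ((N - t : ℕ) : ℝ≥0∞)
                + ((N - t : ℕ) : ℝ≥0∞) * ((N - (t + 1) : ℕ) : ℝ≥0∞) := by
            rw [Nat.cast_add, Nat.cast_mul, Nat.cast_mul]
          calc (N : ℝ≥0∞)⁻¹ * ((t : ℝ≥0∞) * (((N - t : ℕ) : ℝ≥0∞) * r ^ K)
                + ((N - t : ℕ) : ℝ≥0∞) * (((N - (t + 1) : ℕ) : ℝ≥0∞) * r ^ K))
              = (N : ℝ≥0∞)⁻¹ * (((t * (N - t) + (N - t) * (N - (t + 1)) : ℕ) : ℝ≥0∞) * r ^ K) := by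
                rw [hsum]; ring
            _ = (N : ℝ≥0∞)⁻¹ * ((((N - t) * (N - 1) : ℕ) : ℝ≥0∞) * r ^ K) := by rw [hnat]
            _ = ((N - t : ℕ) : ℝ≥0∞) * r ^ (K + 1) := by
                rw [Nat.cast_mul, pow_succ, hr]; ring

end Main


/-- **Rapid mixing of the random-to-top shuffle (upper bound).** For any `N ≥ 1`, `K`, and
starting decks `d₁, d₂`, the TV distance between the `K`-step distributions is at most
`N · ((N−1)/N)^K`. -/
theorem rtopWalk_tv_le (N K : ℕ) (hN : 0 < N) (d₁ d₂ : Equiv.Perm (Fin N)) :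
    tvDist (rtopWalk hN d₁ K) (rtopWalk hN d₂ K)
      ≤ (N : ℝ≥0∞) * (((N : ℝ≥0∞) - 1) / (N : ℝ≥0∞)) ^ K := by
  have hcoup := tv_le_coupling (cWalk hN K (d₁, d₂))
  rw [cWalk_fst hN K (d₁, d₂), cWalk_snd hN K (d₁, d₂)] at hcoup
  refine le_trans hcoup ?_
  have hB := cWalk_offdiag_le hN K ∅ d₁ d₂ (inv_empty d₁ d₂)
  simpa using hB
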